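/- Let a ≠ b and c ≠ d be real numbers. If G_{a,b}(x,y) · G_{c,d}(x,y) = xy for all positive reals x, y, then either a+b = 0 and c+d = 0, or {a,b} = {-c,-d}. -/

import Mathlib

open Real

noncomputable def gini (p q x y : ℝ) : ℝ := ((x ^ p + y ^ p) / (x ^ q + y ^ q)) ^ (1 / (p - q))

namespace GiniAux

noncomputable def G0 (u : ℝ) : ℝ := log (cosh u)
noncomputable def G1 (u : ℝ) : ℝ := sinh u / cosh u
noncomputable def G2 (u : ℝ) : ℝ := (cosh u ^ 2)⁻¹
noncomputable def G3 (u : ℝ) : ℝ := -(2 * sinh u) / cosh u ^ 3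
noncomputable def G4 (u : ℝ) : ℝ := (6 * sinh u ^ 2 - 2 * cosh u ^ 2) / cosh u ^ 4

lemma cosh_ne (u : ℝ) : cosh u ≠ 0 := (cosh_pos u).ne'

lemma hG0 (u : ℝ) : HasDerivAt G0 (G1 u) u := by
  rw [show G0 = fun y => log (cosh y) from rfl]
  simpa [G0, G1] using (Real.hasDerivAt_cosh u).log (cosh_ne u)

lemma hG1 (u : ℝ) : HasDerivAt G1 (G2 u) u := by
  have h := (Real.hasDerivAt_sinh u).div (Real.hasDerivAt_cosh u) (cosh_ne u)
  have e : (cosh u * cosh u - sinh u * sinh u) / cosh u ^ 2 = G2 u := by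
    have hc := Real.cosh_sq_sub_sinh_sq u
    rw [G2, ← one_div]
    congr 1
    linear_combination hc
  rw [show G1 = sinh / cosh from rfl]
  simpa [G1, e] using h

lemma hG2 (u : ℝ) : HasDerivAt G2 (G3 u) u := by
  have h := (((Real.hasDerivAt_cosh u).pow 2)).inv (pow_ne_zero 2 (cosh_ne u))
  have e : -(2 * cosh u * sinh u) / (cosh u ^ 2) ^ 2 = G3 u := by
    have hc := cosh_ne u
    rw [G3, div_eq_div_iff (pow_ne_zero _ (pow_ne_zero _ hc)) (pow_ne_zero _ hc)]
    ring
  rw [show G2 = (cosh ^ 2)⁻¹ from rfl]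
  simpa [e] using h

lemma hG3 (u : ℝ) : HasDerivAt G3 (G4 u) u := by
  have h := ((Real.hasDerivAt_sinh u).const_mul (-2 : ℝ)).div
      ((Real.hasDerivAt_cosh u).pow 3) (pow_ne_zero 3 (cosh_ne u))
  have e : (-(2 * cosh u * cosh u ^ 3) + 2 * sinh u * (3 * cosh u ^ 2 * sinh u)) /
      (cosh u ^ 3) ^ 2 = G4 u := by
    have hc := cosh_ne u
    rw [G4, div_eq_div_iff (pow_ne_zero _ (pow_ne_zero _ hc)) (pow_ne_zero _ hc)]
    ring
  rw [show G3 = (fun y => -(2 * sinh y)) / cosh ^ 3 from rfl]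
  simpa [e] using h

lemma hscale (f f' : ℝ → ℝ) (hf : ∀ u, HasDerivAt f (f' u) u) (p t : ℝ) :
    HasDerivAt (fun t => f (p * t)) (p * f' (p * t)) t := by
  rw [show (fun t => f (p * t)) = f ∘ HMul.hMul p from rfl]
  simpa [Function.comp, mul_comm] using (hf (p * t)).comp t ((hasDerivAt_id t).const_mul p)

noncomputable def psi (A B a b c d α β γ δ : ℝ) (f : ℝ → ℝ) (t : ℝ) : ℝ :=
  A * (α * f (a * t) - β * f (b * t)) + B * (γ * f (c * t) - δ * f (d * t))

lemma psi_deriv (A B a b c d α β γ δ : ℝ) (f f' : ℝ → ℝ)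
    (hf : ∀ u, HasDerivAt f (f' u) u) (t : ℝ) :
    HasDerivAt (psi A B a b c d α β γ δ f) (psi A B a b c d (α*a) (β*b) (γ*c) (δ*d) f' t) t := by
  have ha := (hscale f f' hf a t).const_mul α
  have hb := (hscale f f' hf b t).const_mul β
  have hc := (hscale f f' hf c t).const_mul γ
  have hd := (hscale f f' hf d t).const_mul δ
  have H := ((ha.sub hb).const_mul A).add ((hc.sub hd).const_mul B)
  rw [show psi A B a b c d α β γ δ f = (fun y => A * (α * f (a * y) - β * f (b * y))) +
      fun y => B * (γ * f (c * y) - δ * f (d * y)) from rfl]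
  simpa [psi, mul_assoc] using H

lemma psi_step (A B a b c d α β γ δ : ℝ) (f f' : ℝ → ℝ)
    (hf : ∀ u, HasDerivAt f (f' u) u)
    (hz : ∀ t, psi A B a b c d α β γ δ f t = 0) (t : ℝ) :
    psi A B a b c d (α*a) (β*b) (γ*c) (δ*d) f' t = 0 := by
  have h1 : psi A B a b c d α β γ δ f = fun _ => (0:ℝ) := funext hz
  have h2 := (psi_deriv A B a b c d α β γ δ f f' hf t).deriv
  rw [h1] at h2
  simpa using h2.symm

lemma gini_exp (p q t : ℝ) :
    gini p q (exp t) (exp (-t)) = (cosh (p * t) / cosh (q * t)) ^ (1 / (p - q)) := by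
  unfold gini
  have h1 : (exp t) ^ p = exp (p * t) := by
    rw [Real.rpow_def_of_pos (exp_pos t), Real.log_exp, mul_comm]
  have h2 : (exp (-t)) ^ p = exp (-(p * t)) := by
    rw [Real.rpow_def_of_pos (exp_pos (-t)), Real.log_exp]; ring_nf
  have h3 : (exp t) ^ q = exp (q * t) := by
    rw [Real.rpow_def_of_pos (exp_pos t), Real.log_exp, mul_comm]
  have h4 : (exp (-t)) ^ q = exp (-(q * t)) := by
    rw [Real.rpow_def_of_pos (exp_pos (-t)), Real.log_exp]; ring_nf
  rw [h1, h2, h3, h4]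
  congr 1
  rw [Real.cosh_eq, Real.cosh_eq]
  have := Real.exp_pos (q * t)
  have := Real.exp_pos (-(q * t))
  field_simp

end GiniAux

open GiniAux
theorem geom_invariance_necessity (a b c d : ℝ) (hab : a ≠ b) (hcd : c ≠ d)
    (h : ∀ x y : ℝ, 0 < x → 0 < y → gini a b x y * gini c d x y = x * y) :
    (a + b = 0 ∧ c + d = 0) ∨ ({a, b} : Set ℝ) = {-c, -d} := by
  have hA : a - b ≠ 0 := sub_ne_zero.mpr hab
  have hB : c - d ≠ 0 := sub_ne_zero.mpr hcd
  -- Step 1: the log identity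
  have h0 : ∀ t, psi (1/(a-b)) (1/(c-d)) a b c d 1 1 1 1 G0 t = 0 := by
    intro t
    have H := h (exp t) (exp (-t)) (exp_pos _) (exp_pos _)
    rw [gini_exp, gini_exp] at H
    have hxy : exp t * exp (-t) = 1 := by rw [← Real.exp_add]; simp
    rw [hxy] at H
    have hb1 : (0:ℝ) < cosh (a*t) / cosh (b*t) := div_pos (cosh_pos _) (cosh_pos _)
    have hb2 : (0:ℝ) < cosh (c*t) / cosh (d*t) := div_pos (cosh_pos _) (cosh_pos _)
    have hl := congrArg Real.log H
    rw [Real.log_mul (Real.rpow_pos_of_pos hb1 _).ne' (Real.rpow_pos_of_pos hb2 _).ne',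
      Real.log_rpow hb1, Real.log_rpow hb2, Real.log_one,
      Real.log_div (cosh_ne _) (cosh_ne _), Real.log_div (cosh_ne _) (cosh_ne _)] at hl
    simpa [psi, G0] using hl
  -- Step 2: differentiate four times
  have h1 := psi_step _ _ _ _ _ _ _ _ _ _ G0 G1 hG0 h0
  have h2 := psi_step _ _ _ _ _ _ _ _ _ _ G1 G2 hG1 h1
  have h3 := psi_step _ _ _ _ _ _ _ _ _ _ G2 G3 hG2 h2
  have h4 := psi_step _ _ _ _ _ _ _ _ _ _ G3 G4 hG3 h3
  -- Step 3: evaluate at 0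
  have e2 := h2 0
  have e4 := h4 0
  have hcosh0 : Real.cosh 0 = 1 := Real.cosh_zero
  have hsinh0 : Real.sinh 0 = 0 := Real.sinh_zero
  simp only [psi, mul_zero, G2, G4, hcosh0, hsinh0] at e2 e4
  norm_num at e2 e4
  -- e2 : 1/(a-b) * (a² - b²) + 1/(c-d) * (c² - d²) = 0 (roughly)
  have key1 : a + b + c + d = 0 := by
    have hmul : (a + b + c + d) * ((a-b) * (c-d)) = 0 := by
      field_simp at e2
      linarith [e2]
    rcases mul_eq_zero.mp hmul with h' | h'
    · linarith
    · exact absurd h' (mul_ne_zero hA hB)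
  have key2 : (a+b)*(a^2+b^2) + (c+d)*(c^2+d^2) = 0 := by
    have hmul : ((a+b)*(a^2+b^2) + (c+d)*(c^2+d^2)) * ((a-b) * (c-d)) = 0 := by
      field_simp at e4
      nlinarith [e4]
    rcases mul_eq_zero.mp hmul with h' | h'
    · exact h'
    · exact absurd h' (mul_ne_zero hA hB)
  -- Step 4: algebra
  by_cases hS : a + b = 0
  · exact Or.inl ⟨hS, by linarith⟩
  · right
    have hsum : c + d = -(a+b) := by linarith
    have hsq : a^2 + b^2 = c^2 + d^2 := by
      have : (a+b) * (a^2+b^2 - (c^2+d^2)) = 0 := by nlinarith [key2, hsum]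
      rcases mul_eq_zero.mp this with h' | h'
      · exact absurd h' hS
      · linarith
    have hprod : c * d = a * b := by linear_combination (c + d - a - b) / 2 * key1 + hsq / 2
    have hα : (a + c) * (a + d) = 0 := by linear_combination a * key1 + hprod
    have hβ : (b + c) * (b + d) = 0 := by linear_combination b * key1 + hprod
    rcases mul_eq_zero.mp hα with h1' | h1' <;> rcases mul_eq_zero.mp hβ with h2' | h2'
    · exact absurd (by linarith : a = b) hab
    · have ea : a = -c := by linarith
      have eb : b = -d := by linarith
      rw [ea, eb]
    · have ea : a = -d := by linarith
      have eb : b = -c := by linarith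
      rw [ea, eb, Set.pair_comm]
    · exact absurd (by linarith : a = b) hab
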